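/- For every pair (i, j) with 1 ≤ i ≤ s and 1 ≤ j ≤ r_i, the image of the variable T_{ij} in the quotient ring A[𝒵] is a prime element of A[𝒵]. -/

import Mathlib

set_option linter.unusedSectionVars false

open MvPolynomial

section NT
variable {ι : Type} [Fintype ι] [DecidableEq ι]

private lemma natAbs_pow_dvd_iff (p e : ℕ) (x : ℤ) : p ^ e ∣ x.natAbs ↔ (p : ℤ) ^ e ∣ x := by
  rw [← Int.natAbs_dvd_natAbs, Int.natAbs_pow, Int.natAbs_natCast]

lemma keyNT (n : ℕ) (d : ι → ℕ) (d0 : ℕ) (m : ι → ℤ)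
    (hd : ∀ l l', l ≠ l' → Nat.Coprime (d l) (d l'))
    (hd0 : ∀ l, Nat.Coprime (d l) d0)
    (h1 : ∀ l, (n : ℤ) ∣ m l * d l) (h2 : (n : ℤ) ∣ (∑ l, m l) * d0) :
    ∀ l, (n : ℤ) ∣ m l := by
  intro l
  rw [Int.natCast_dvd, Nat.dvd_iff_prime_pow_dvd_dvd]
  intro p e hp hpe
  have hp' : p.Prime := hp
  have hpen : ∀ l', p ^ e ∣ (m l' * d l').natAbs := fun l' =>
    Int.natCast_dvd.mp ((Int.natCast_dvd_natCast.mpr hpe).trans (h1 l'))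
  have key : ∀ l', ¬ p ∣ d l' → p ^ e ∣ (m l').natAbs := by
    intro l' hnd
    have h1' : p ^ e ∣ (m l').natAbs * d l' := by
      have := hpen l'; rwa [Int.natAbs_mul, Int.natAbs_natCast] at this
    exact (Nat.Coprime.pow_left e ((Nat.Prime.coprime_iff_not_dvd hp').mpr hnd)).dvd_of_dvd_mul_right h1'
  by_cases hpl : p ∣ d l
  · have hl' : ∀ l', l' ≠ l → (p : ℤ) ^ e ∣ m l' := by
      intro l' hne
      have hnd : ¬ p ∣ d l' := fun hdvd =>
        Nat.Prime.not_dvd_one hp' (Nat.dvd_gcd hdvd hpl |>.trans (hd l' l hne).dvd)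
      exact (natAbs_pow_dvd_iff p e _).mp (key l' hnd)
    have hnd0 : ¬ p ∣ d0 := fun hdvd =>
      Nat.Prime.not_dvd_one hp' (Nat.dvd_gcd hpl hdvd |>.trans (hd0 l).dvd)
    have hsum : (p : ℤ) ^ e ∣ ∑ l', m l' := by
      have h2' : p ^ e ∣ (∑ l', m l').natAbs * d0 := by
        have := Int.natCast_dvd.mp ((Int.natCast_dvd_natCast.mpr hpe).trans h2)
        rwa [Int.natAbs_mul, Int.natAbs_natCast] at this
      exact (natAbs_pow_dvd_iff p e _).mp
        ((Nat.Coprime.pow_left e ((Nat.Prime.coprime_iff_not_dvd hp').mpr hnd0)).dvd_of_dvd_mul_right h2')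
    rw [natAbs_pow_dvd_iff]
    have heq : m l = (∑ l', m l') - ∑ l' ∈ Finset.univ.erase l, m l' := by
      rw [Finset.sum_erase_eq_sub (Finset.mem_univ l)]; ring
    rw [heq]
    exact dvd_sub hsum (Finset.dvd_sum fun l' hl'' => hl' l' (Finset.ne_of_mem_erase hl''))
  · exact key l hpl
end NT

section Abstract
variable {σ : Type} [Fintype σ] [DecidableEq σ]
variable {ι : Type} [Fintype ι] [DecidableEq ι]

/-- cast a ℕ-finsupp to a ℤ-finsupp -/
noncomputable def natToZ : (σ →₀ ℕ) →+ (σ →₀ ℤ) :=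
  Finsupp.mapRange.addMonoidHom (Nat.castAddMonoidHom ℤ)

@[simp] lemma natToZ_apply (u : σ →₀ ℕ) (v : σ) : natToZ u v = (u v : ℤ) := rfl

lemma natToZ_injective : Function.Injective (natToZ (σ := σ)) :=
  Finsupp.mapRange_injective _ (map_zero _) Nat.cast_injective

variable (a : ι → (σ →₀ ℕ)) (a₀ : σ →₀ ℕ)

noncomputable def lrel (l : ι) : σ →₀ ℤ := natToZ (a l) - natToZ a₀

noncomputable def latt : Submodule ℤ (σ →₀ ℤ) := Submodule.span ℤ (Set.range (lrel a a₀))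

variable {a a₀}
variable (hdisj : ∀ l l', l ≠ l' → Disjoint (a l).support (a l').support)
    (hdisj0 : ∀ l, Disjoint (a l).support a₀.support)

section
include hdisj hdisj0 in
lemma lrel_apply_mem {l l' : ι} {v : σ} (hv : v ∈ (a l).support) :
    lrel a a₀ l' v = if l' = l then (a l v : ℤ) else 0 := by
  have hv0 : a₀ v = 0 := Finsupp.notMem_support_iff.mp (Finset.disjoint_left.mp (hdisj0 l) hv)
  rcases eq_or_ne l' l with rfl | hne
  · simp [lrel, hv0]
  · have : a l' v = 0 := Finsupp.notMem_support_iff.mp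
      (Finset.disjoint_right.mp (hdisj l' l hne) hv)
    simp [lrel, hv0, this, hne]

include hdisj0 in
lemma lrel_apply_mem0 {l' : ι} {v : σ} (hv : v ∈ a₀.support) :
    lrel a a₀ l' v = -(a₀ v : ℤ) := by
  have : a l' v = 0 := Finsupp.notMem_support_iff.mp
    (Finset.disjoint_right.mp (hdisj0 l') hv)
  simp [lrel, this]

end

-- the abbreviations for the gcds
noncomputable def dgcd (a : σ →₀ ℕ) : ℕ := a.support.gcd a

include hdisj hdisj0 in
lemma latt_torsionfree
    (hgcd : ∀ l l', l ≠ l' → Nat.Coprime (dgcd (a l)) (dgcd (a l')))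
    (hgcd0 : ∀ l, Nat.Coprime (dgcd (a l)) (dgcd a₀)) :
    NoZeroSMulDivisors ℤ ((σ →₀ ℤ) ⧸ latt a a₀) := by
  constructor
  intro n x h
  rw [or_iff_not_imp_left]
  intro hn
  obtain ⟨w, rfl⟩ := Submodule.Quotient.mk_surjective _ x
  rw [← Submodule.Quotient.mk_smul, Submodule.Quotient.mk_eq_zero] at h
  rw [latt] at h
  obtain ⟨m, hm⟩ := (Submodule.mem_span_range_iff_exists_fun ℤ).mp h
  -- pointwise evaluation
  have heval : ∀ v : σ, (∑ l, m l * lrel a a₀ l v) = n * w v := by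
    intro v
    have := congrFun (congrArg (fun f => Finsupp.toFun f) hm) v
    simpa [Finsupp.finset_sum_apply, Finsupp.smul_apply, smul_eq_mul] using
      congrArg (fun f => f v) hm
  set N := n.natAbs with hN
  have hdvd1 : ∀ l, (N : ℤ) ∣ m l * dgcd (a l) := by
    intro l
    rw [Int.natCast_dvd, Int.natAbs_mul, Int.natAbs_natCast]
    have : N ∣ (a l).support.gcd (fun v => (m l).natAbs * a l v) := by
      apply Finset.dvd_gcd
      intro v hv
      have h1 : (∑ l', m l' * lrel a a₀ l' v) = m l * a l v := by
        rw [Finset.sum_eq_single l]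
        · rw [lrel_apply_mem hdisj hdisj0 hv, if_pos rfl]
        · intro l' _ hne
          rw [lrel_apply_mem hdisj hdisj0 hv, if_neg hne, mul_zero]
        · intro habs; exact absurd (Finset.mem_univ l) habs
      have h2 : (n : ℤ) ∣ m l * a l v := Dvd.intro (w v) (by rw [← heval v, h1])
      rw [← Int.natAbs_dvd] at h2
      rw [Int.natCast_dvd, Int.natAbs_mul, Int.natAbs_natCast] at h2
      exact h2
    rwa [Finset.gcd_mul_left, normalize_eq] at this
  have hdvd2 : (N : ℤ) ∣ (∑ l, m l) * dgcd a₀ := by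
    rw [Int.natCast_dvd, Int.natAbs_mul, Int.natAbs_natCast]
    have : N ∣ a₀.support.gcd (fun v => (∑ l, m l).natAbs * a₀ v) := by
      apply Finset.dvd_gcd
      intro v hv
      have h1 : (∑ l', m l' * lrel a a₀ l' v) = -((∑ l', m l') * a₀ v) := by
        rw [Finset.sum_mul, ← Finset.sum_neg_distrib]
        apply Finset.sum_congr rfl
        intro l' _
        rw [lrel_apply_mem0 hdisj0 hv]; ring
      have h2 : (n : ℤ) ∣ (∑ l', m l') * a₀ v := by
        have : (n : ℤ) ∣ -((∑ l', m l') * a₀ v) := Dvd.intro (w v) (by rw [← heval v, h1])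
        exact (dvd_neg).mp this
      rw [← Int.natAbs_dvd] at h2
      rw [Int.natCast_dvd, Int.natAbs_mul, Int.natAbs_natCast] at h2
      exact h2
    rwa [Finset.gcd_mul_left, normalize_eq] at this
  have hkey := keyNT N (fun l => dgcd (a l)) (dgcd a₀) m hgcd hgcd0 hdvd1 hdvd2
  -- now divide out
  have hndvd : ∀ l, n ∣ m l := fun l => Int.natAbs_dvd.mp (hkey l)
  rw [Submodule.Quotient.mk_eq_zero, latt]
  have hw : w = ∑ l, (m l / n) • lrel a a₀ l := by
    have h2 : n • w = n • ∑ l, (m l / n) • lrel a a₀ l := by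
      rw [Finset.smul_sum, ← hm]
      apply Finset.sum_congr rfl
      intro l _
      rw [smul_smul, Int.mul_ediv_cancel' (hndvd l)]
    ext v
    have := congrArg (fun f => f v) h2
    simp only [Finsupp.smul_apply, smul_eq_mul] at this
    exact mul_left_cancel₀ hn this
  rw [hw]
  exact Submodule.sum_smul_mem _ _ (fun l _ => Submodule.subset_span (Set.mem_range_self l))

section Hom
variable {k : Type} [Field k] [IsAlgClosed k]

include hdisj hdisj0 in
lemma latt_uniqueSums
    (hgcd : ∀ l l', l ≠ l' → Nat.Coprime (dgcd (a l)) (dgcd (a l')))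
    (hgcd0 : ∀ l, Nat.Coprime (dgcd (a l)) (dgcd a₀)) :
    UniqueSums ((σ →₀ ℤ) ⧸ latt a a₀) := by
  haveI := latt_torsionfree hdisj hdisj0 hgcd hgcd0
  haveI : Module.Finite ℤ ((σ →₀ ℤ) ⧸ latt a a₀) :=
    Module.Finite.of_surjective (latt a a₀).mkQ (Submodule.Quotient.mk_surjective _)
  haveI : Module.Free ℤ ((σ →₀ ℤ) ⧸ latt a a₀) := Module.free_of_finite_type_torsion_free'
  let b := Module.Free.chooseBasis ℤ ((σ →₀ ℤ) ⧸ latt a a₀)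
  exact UniqueSums.of_injective_addHom b.repr.toLinearMap.toAddHom b.repr.injective inferInstance

variable (a) in
/-- a distinguished variable in the support of each `a l` -/
noncomputable def pickv (hne : ∀ l, (a l).support.Nonempty) (l : ι) : σ := (hne l).choose

lemma pickv_mem (hne : ∀ l, (a l).support.Nonempty) (l : ι) : pickv a hne l ∈ (a l).support :=
  (hne l).choose_spec

include hdisj in
lemma pickv_injective (hne : ∀ l, (a l).support.Nonempty) :
    Function.Injective (pickv a hne) := by
  intro l l' h
  by_contra hne'
  exact Finset.disjoint_left.mp (hdisj l l' hne') (pickv_mem hne l) (h ▸ pickv_mem hne l')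

variable (a) in
/-- the root `ρ l` with `ρ l ^ (a l (pickv l)) = c l` -/
noncomputable def rho (hne : ∀ l, (a l).support.Nonempty) (c : ι → k) (l : ι) : k :=
  (IsAlgClosed.exists_pow_nat_eq (c l)
    (Nat.pos_of_ne_zero (Finsupp.mem_support_iff.mp (pickv_mem hne l)))).choose

lemma rho_spec (hne : ∀ l, (a l).support.Nonempty) (c : ι → k) (l : ι) :
    rho a hne c l ^ (a l (pickv a hne l)) = c l :=
  (IsAlgClosed.exists_pow_nat_eq (c l)
    (Nat.pos_of_ne_zero (Finsupp.mem_support_iff.mp (pickv_mem hne l)))).choose_spec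

lemma rho_ne_zero (hne : ∀ l, (a l).support.Nonempty) (c : ι → k) (l : ι) (hc : c l ≠ 0) :
    rho a hne c l ≠ 0 := by
  intro h
  apply hc
  rw [← rho_spec hne c l, h, zero_pow]
  exact Finsupp.mem_support_iff.mp (pickv_mem hne l)

variable (a) in
/-- the scaling factors of the variables -/
noncomputable def lam (hne : ∀ l, (a l).support.Nonempty) (c : ι → k) (v0 : σ) (v : σ) : k :=
  letI := Classical.propDecidable
  if h : ∃ l, pickv a hne l = v then rho a hne c h.choose
  else if v = v0 then 0 else 1

include hdisj in
lemma lam_pickv (hne : ∀ l, (a l).support.Nonempty) (c : ι → k) (v0 : σ) (l : ι) :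
    lam a hne c v0 (pickv a hne l) = rho a hne c l := by
  rw [lam]
  have h : ∃ l', pickv a hne l' = pickv a hne l := ⟨l, rfl⟩
  rw [dif_pos h]
  congr 1
  exact pickv_injective hdisj hne h.choose_spec

lemma lam_v0 (hne : ∀ l, (a l).support.Nonempty) (c : ι → k) (v0 : σ)
    (hv0 : ∀ l, v0 ∉ (a l).support) : lam a hne c v0 v0 = 0 := by
  rw [lam]
  have h : ¬ ∃ l, pickv a hne l = v0 := by
    rintro ⟨l, hl⟩; exact hv0 l (hl ▸ pickv_mem hne l)
  rw [dif_neg h, if_pos rfl]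

lemma lam_other (hne : ∀ l, (a l).support.Nonempty) (c : ι → k) (v0 : σ) (v : σ)
    (h1 : ∀ l, pickv a hne l ≠ v) (h2 : v ≠ v0) : lam a hne c v0 v = 1 := by
  rw [lam]
  have h : ¬ ∃ l, pickv a hne l = v := fun ⟨l, hl⟩ => h1 l hl
  rw [dif_neg h, if_neg h2]

lemma lam_ne_zero (hne : ∀ l, (a l).support.Nonempty) (c : ι → k) (v0 : σ) (v : σ)
    (hc : ∀ l, c l ≠ 0) (h2 : v ≠ v0) : lam a hne c v0 v ≠ 0 := by
  rw [lam]
  letI := Classical.propDecidable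
  split
  · next h => exact rho_ne_zero hne c h.choose (hc _)
  · simp [h2]

end Hom


section Phi
variable {k : Type} [Field k] [IsAlgClosed k]

open AddMonoidAlgebra

variable (a a₀) in
/-- the monomial realization map into the group algebra of the quotient lattice -/
noncomputable def phi (hne : ∀ l, (a l).support.Nonempty) (c : ι → k) (v0 : σ) :
    MvPolynomial σ k →+* AddMonoidAlgebra k ((σ →₀ ℤ) ⧸ latt a a₀) :=
  eval₂Hom AddMonoidAlgebra.singleZeroRingHom
    (fun v => AddMonoidAlgebra.single ((latt a a₀).mkQ (Finsupp.single v 1)) (lam a hne c v0 v))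

variable (a) in
/-- the product of the scaling factors with exponents `u` -/
noncomputable def Lam (hne : ∀ l, (a l).support.Nonempty) (c : ι → k) (v0 : σ) (u : σ →₀ ℕ) : k :=
  ∏ v : σ, lam a hne c v0 v ^ u v

variable (hne : ∀ l, (a l).support.Nonempty) (c : ι → k) (v0 : σ)

lemma phi_X (v : σ) : phi a a₀ hne c v0 (X v) =
    AddMonoidAlgebra.single ((latt a a₀).mkQ (Finsupp.single v 1)) (lam a hne c v0 v) := by
  simp [phi]

lemma phi_C (x : k) : phi a a₀ hne c v0 (C x) = AddMonoidAlgebra.single 0 x := by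
  simp only [phi, eval₂Hom_C]
  rfl

lemma single_finset_prod {G : Type} [AddCommMonoid G] (t : Finset σ) (g : σ → G) (b : σ → k) :
    ∏ v ∈ t, (AddMonoidAlgebra.single (g v) (b v) : AddMonoidAlgebra k G) =
      AddMonoidAlgebra.single (∑ v ∈ t, g v) (∏ v ∈ t, b v) := by
  classical
  induction t using Finset.induction with
  | empty => simp [AddMonoidAlgebra.one_def]
  | insert _ _ h ih =>
      rw [Finset.prod_insert h, Finset.sum_insert h, Finset.prod_insert h, ih,
        AddMonoidAlgebra.single_mul_single]

lemma sum_single_natToZ (u : σ →₀ ℕ) :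
    (∑ v : σ, Finsupp.single v ((u v : ℤ))) = natToZ u := by
  ext w
  rw [Finsupp.finset_sum_apply]
  simp [Finsupp.single_apply]

lemma phi_monomial (u : σ →₀ ℕ) (b : k) :
    phi a a₀ hne c v0 (monomial u b) =
      AddMonoidAlgebra.single ((latt a a₀).mkQ (natToZ u)) (b * Lam a hne c v0 u) := by
  rw [monomial_eq, Finsupp.prod_fintype _ _ (fun v => pow_zero _)]
  rw [map_mul, map_prod]
  simp_rw [map_pow, phi_X, AddMonoidAlgebra.single_pow]
  rw [single_finset_prod, phi_C]
  rw [AddMonoidAlgebra.single_mul_single, zero_add]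
  congr 1
  have : ∀ v : σ, u v • (latt a a₀).mkQ (Finsupp.single v 1) =
      (latt a a₀).mkQ (Finsupp.single v ((u v : ℤ))) := by
    intro v
    rw [← map_nsmul]
    congr 1
    rw [Finsupp.smul_single, nsmul_eq_mul, mul_one]
  simp_rw [this]
  rw [← map_sum, sum_single_natToZ]

end Phi


section PhiRel
variable {k : Type} [Field k] [IsAlgClosed k]
variable (hne : ∀ l, (a l).support.Nonempty) (c : ι → k) (v0 : σ)

include hdisj in
lemma Lam_rel (hv0 : ∀ l, v0 ∉ (a l).support) (l : ι) :
    Lam a hne c v0 (a l) = c l := by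
  rw [Lam]
  rw [← Finset.prod_subset (Finset.subset_univ (a l).support)
    (fun v _ hv => by rw [Finsupp.notMem_support_iff.mp hv, pow_zero])]
  rw [Finset.prod_eq_single_of_mem (pickv a hne l) (pickv_mem hne l)]
  · rw [lam_pickv hdisj hne c v0 l, rho_spec]
  · intro v hv hvne
    rw [lam_other hne c v0 v ?_ ?_, one_pow]
    · intro l' hl'
      rcases eq_or_ne l' l with rfl | hll
      · exact hvne hl'.symm
      · exact Finset.disjoint_left.mp (hdisj l' l hll) (hl' ▸ pickv_mem hne l') hv
    · intro h; exact hv0 l (h ▸ hv)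

include hdisj0 in
lemma Lam_base (hv00 : v0 ∉ a₀.support) : Lam a hne c v0 a₀ = 1 := by
  rw [Lam]
  rw [← Finset.prod_subset (Finset.subset_univ a₀.support)
    (fun v _ hv => by rw [Finsupp.notMem_support_iff.mp hv, pow_zero])]
  apply Finset.prod_eq_one
  intro v hv
  rw [lam_other hne c v0 v ?_ ?_, one_pow]
  · intro l' hl'
    exact Finset.disjoint_right.mp (hdisj0 l') hv (hl' ▸ pickv_mem hne l')
  · intro h; exact hv00 (h ▸ hv)

lemma mkQ_rel_eq (l : ι) :
    (latt a a₀).mkQ (natToZ (a l)) = (latt a a₀).mkQ (natToZ a₀) := by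
  rw [Submodule.mkQ_apply, Submodule.mkQ_apply, Submodule.Quotient.eq]
  exact Submodule.subset_span ⟨l, rfl⟩

include hdisj hdisj0 in
lemma phi_rel (hv0 : ∀ l, v0 ∉ (a l).support) (hv00 : v0 ∉ a₀.support) (l : ι) :
    phi a a₀ hne c v0 (monomial (a l) 1 - C (c l) * monomial a₀ 1) = 0 := by
  rw [map_sub, map_mul, phi_C, phi_monomial, phi_monomial, mkQ_rel_eq,
    AddMonoidAlgebra.single_mul_single, zero_add, one_mul, one_mul,
    Lam_rel hdisj hne c v0 hv0 l, Lam_base hdisj0 hne c v0 hv00, mul_one, sub_self]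

lemma phi_X_v0 (hv0 : ∀ l, v0 ∉ (a l).support) :
    phi a a₀ hne c v0 (X v0) = 0 := by
  rw [phi_X, lam_v0 hne c v0 hv0]; exact AddMonoidAlgebra.single_zero _

end PhiRel


section PrimeSec
variable {k : Type} [Field k] [IsAlgClosed k]

variable (a a₀) in
/-- the ideal generated by `X v0` and the binomials `M_l - c_l M_0` -/
noncomputable def binIdeal (c : ι → k) (v0 : σ) : Ideal (MvPolynomial σ k) :=
  Ideal.span ({X v0} ∪ Set.range (fun l => (monomial (a l) (1:k)) - C (c l) * monomial a₀ 1))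

variable (a) in
/-- normal monomials -/
def IsNormal (v0 : σ) (u : σ →₀ ℕ) : Prop := u v0 = 0 ∧ ∀ l, ¬ a l ≤ u

variable (a) in
/-- the submodule of polynomials supported on normal monomials -/
noncomputable def NS (v0 : σ) : Submodule k (MvPolynomial σ k) where
  carrier := {p | ∀ u ∈ p.support, IsNormal a v0 u}
  add_mem' := by
    classical
    intro p q hp hq u hu
    rcases Finset.mem_union.mp (MvPolynomial.support_add hu) with h | h
    · exact hp u h
    · exact hq u h
  zero_mem' := by intro u hu; simp at hu
  smul_mem' := by
    intro t p hp u hu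
    exact hp u (MvPolynomial.support_smul hu)

lemma mem_NS {v0 : σ} {p : MvPolynomial σ k} :
    p ∈ NS a v0 ↔ ∀ u ∈ p.support, IsNormal a v0 u := Iff.rfl

variable (a) in
/-- weight of a monomial: total degree in the variables of the relation blocks -/
noncomputable def wt (u : σ →₀ ℕ) : ℕ := ∑ l, ∑ v ∈ (a l).support, u v

lemma wt_add (x y : σ →₀ ℕ) : wt a (x + y) = wt a x + wt a y := by
  simp [wt, Finsupp.add_apply, Finset.sum_add_distrib]

lemma wt_rel_pos (hne : ∀ l, (a l).support.Nonempty) (l : ι) : 0 < wt a (a l) := by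
  obtain ⟨v, hv⟩ := hne l
  have h1 : 0 < ∑ v ∈ (a l).support, a l v :=
    Finset.sum_pos' (fun _ _ => Nat.zero_le _)
      ⟨v, hv, Nat.pos_of_ne_zero (Finsupp.mem_support_iff.mp hv)⟩
  calc 0 < ∑ v ∈ (a l).support, a l v := h1
    _ ≤ ∑ l', ∑ v ∈ (a l').support, a l v :=
        Finset.single_le_sum (f := fun l' => ∑ v ∈ (a l').support, a l v)
          (fun _ _ => Nat.zero_le _) (Finset.mem_univ l)

include hdisj0 in
lemma wt_base : wt a a₀ = 0 := by
  rw [wt]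
  apply Finset.sum_eq_zero
  intro l _
  apply Finset.sum_eq_zero
  intro v hv
  exact Finsupp.notMem_support_iff.mp (Finset.disjoint_left.mp (hdisj0 l) hv)

include hdisj0 in
lemma monomial_mem_sup (hne : ∀ l, (a l).support.Nonempty) (c : ι → k) (v0 : σ) :
    ∀ (n : ℕ) (u : σ →₀ ℕ) (b : k), wt a u = n →
      monomial u b ∈ NS a v0 ⊔ (binIdeal a a₀ c v0).restrictScalars k := by
  intro n
  induction n using Nat.strong_induction_on with
  | _ n ih =>
  intro u b hwt
  classical
  by_cases h0 : u v0 = 0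
  swap
  · -- `X v0` divides the monomial
    have hle : Finsupp.single v0 1 ≤ u := by
      rw [Finsupp.le_iff]
      intro v hv
      rw [Finsupp.mem_support_single] at hv
      rw [hv.1, Finsupp.single_eq_same]
      omega
    have hd : monomial u b = X v0 * monomial (u - Finsupp.single v0 1) b := by
      rw [X, monomial_mul, one_mul, add_comm, tsub_add_cancel_of_le hle]
    rw [hd]
    apply Submodule.mem_sup_right
    rw [Submodule.restrictScalars_mem]
    exact Ideal.mul_mem_right _ _ (Ideal.subset_span (Or.inl rfl))
  by_cases hl : ∃ l, a l ≤ u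
  · obtain ⟨l, hle⟩ := hl
    have h1 : a l + (u - a l) = u := by rw [add_comm]; exact tsub_add_cancel_of_le hle
    have hdecomp : monomial u b =
        (monomial (a l) 1 - C (c l) * monomial a₀ 1) * monomial (u - a l) b
          + monomial ((u - a l) + a₀) (c l * b) := by
      rw [← C_mul_monomial, sub_mul, monomial_mul, one_mul, h1, mul_assoc, monomial_mul,
        one_mul, add_comm a₀ (u - a l)]
      ring
    rw [hdecomp]
    apply Submodule.add_mem
    · apply Submodule.mem_sup_right
      rw [Submodule.restrictScalars_mem]
      exact Ideal.mul_mem_right _ _ (Ideal.subset_span (Or.inr ⟨l, rfl⟩))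
    · apply ih (wt a ((u - a l) + a₀)) ?_ _ _ rfl
      rw [wt_add, wt_base hdisj0, add_zero]
      have h2 : wt a (u - a l) + wt a (a l) = n := by rw [← wt_add, add_comm, h1, hwt]
      have h3 := wt_rel_pos hne l
      omega
  · -- normal monomial
    apply Submodule.mem_sup_left
    intro u' hu'
    have := MvPolynomial.support_monomial_subset hu'
    rw [Finset.mem_singleton] at this
    subst this
    exact ⟨h0, fun l hle => hl ⟨l, hle⟩⟩

include hdisj0 in
lemma mem_NS_sup (hne : ∀ l, (a l).support.Nonempty) (c : ι → k) (v0 : σ)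
    (f : MvPolynomial σ k) :
    f ∈ NS a v0 ⊔ (binIdeal a a₀ c v0).restrictScalars k := by
  rw [as_sum f]
  exact Submodule.sum_mem _ fun u hu => monomial_mem_sup hdisj0 hne c v0 _ u _ rfl

include hdisj hdisj0 in
lemma normal_sep {v0 : σ} {u u' : σ →₀ ℕ} (hu : IsNormal a v0 u) (hu' : IsNormal a v0 u')
    (h : (latt a a₀).mkQ (natToZ u) = (latt a a₀).mkQ (natToZ u')) : u = u' := by
  rw [Submodule.mkQ_apply, Submodule.mkQ_apply, Submodule.Quotient.eq, latt] at h
  obtain ⟨m, hm⟩ := (Submodule.mem_span_range_iff_exists_fun ℤ).mp h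
  have heval : ∀ l, ∀ v ∈ (a l).support, m l * a l v = (u v : ℤ) - u' v := by
    intro l v hv
    have := congrArg (fun f => f v) hm
    simp only [Finsupp.finset_sum_apply, Finsupp.smul_apply, smul_eq_mul, Finsupp.sub_apply,
      natToZ_apply] at this
    rw [Finset.sum_eq_single l] at this
    · rwa [lrel_apply_mem hdisj hdisj0 hv, if_pos rfl] at this
    · intro l' _ hne'
      rw [lrel_apply_mem hdisj hdisj0 hv, if_neg hne', mul_zero]
    · intro habs; exact absurd (Finset.mem_univ l) habs
  have hml : ∀ l, m l = 0 := by
    intro l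
    rcases lt_trichotomy (m l) 0 with hlt | h0 | hgt
    · exfalso
      apply hu'.2 l
      rw [Finsupp.le_iff]
      intro v hv
      have h1 := heval l v hv
      have h2 : (1 : ℤ) ≤ -m l := by omega
      have h3 : (1 : ℤ) * (a l v) ≤ (-m l) * (a l v) :=
        mul_le_mul_of_nonneg_right h2 (Int.natCast_nonneg _)
      have h4 : (a l v : ℤ) ≤ u' v := by
        have h5 : (0 : ℤ) ≤ u v := Int.natCast_nonneg _
        linarith
      exact_mod_cast h4
    · exact h0
    · exfalso
      apply hu.2 l
      rw [Finsupp.le_iff]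
      intro v hv
      have h1 := heval l v hv
      have h2 : (1 : ℤ) ≤ m l := by omega
      have h3 : (1 : ℤ) * (a l v) ≤ (m l) * (a l v) :=
        mul_le_mul_of_nonneg_right h2 (Int.natCast_nonneg _)
      have h4 : (a l v : ℤ) ≤ u v := by
        have h5 : (0 : ℤ) ≤ u' v := Int.natCast_nonneg _
        linarith
      exact_mod_cast h4
  apply natToZ_injective
  have : natToZ u - natToZ u' = 0 := by
    rw [← hm]
    apply Finset.sum_eq_zero
    intro l _
    rw [hml l, zero_smul]
  rw [sub_eq_zero] at this
  exact this

lemma Lam_ne_zero (hne : ∀ l, (a l).support.Nonempty) (c : ι → k) (v0 : σ)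
    (hc : ∀ l, c l ≠ 0) {u : σ →₀ ℕ} (h0 : u v0 = 0) : Lam a hne c v0 u ≠ 0 := by
  rw [Lam, Finset.prod_ne_zero_iff]
  intro v _
  rcases eq_or_ne v v0 with rfl | hv
  · rw [h0, pow_zero]; exact one_ne_zero
  · exact pow_ne_zero _ (lam_ne_zero hne c v0 v hc hv)

include hdisj hdisj0 in
theorem binIdeal_isPrime (hne : ∀ l, (a l).support.Nonempty) (c : ι → k) (v0 : σ)
    (hv0 : ∀ l, v0 ∉ (a l).support) (hv00 : v0 ∉ a₀.support) (hc : ∀ l, c l ≠ 0)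
    (hgcd : ∀ l l', l ≠ l' → Nat.Coprime (dgcd (a l)) (dgcd (a l')))
    (hgcd0 : ∀ l, Nat.Coprime (dgcd (a l)) (dgcd a₀)) :
    (binIdeal a a₀ c v0).IsPrime := by
  haveI : UniqueSums ((σ →₀ ℤ) ⧸ latt a a₀) := latt_uniqueSums hdisj hdisj0 hgcd hgcd0
  haveI : IsDomain (AddMonoidAlgebra k ((σ →₀ ℤ) ⧸ latt a a₀)) := NoZeroDivisors.to_isDomain _
  have hle : binIdeal a a₀ c v0 ≤ RingHom.ker (phi a a₀ hne c v0) := by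
    rw [binIdeal, Ideal.span_le]
    rintro p (hp | ⟨l, rfl⟩)
    · rw [Set.mem_singleton_iff] at hp
      subst hp
      rw [SetLike.mem_coe, RingHom.mem_ker]
      exact phi_X_v0 hne c v0 hv0
    · rw [SetLike.mem_coe, RingHom.mem_ker]
      exact phi_rel hdisj hdisj0 hne c v0 hv0 hv00 l
  have hker : binIdeal a a₀ c v0 = RingHom.ker (phi a a₀ hne c v0) := by
    apply le_antisymm hle
    intro f hf
    obtain ⟨g, hg, h, hh, rfl⟩ := Submodule.mem_sup.mp (mem_NS_sup hdisj0 hne c v0 f)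
    rw [Submodule.restrictScalars_mem] at hh
    have hphig : phi a a₀ hne c v0 g = 0 := by
      have h1 : phi a a₀ hne c v0 (g + h) = 0 := RingHom.mem_ker.mp hf
      have h2 : phi a a₀ hne c v0 h = 0 := RingHom.mem_ker.mp (hle hh)
      rw [map_add, h2, add_zero] at h1
      exact h1
    have hg0 : g = 0 := by
      ext u
      rw [coeff_zero]
      by_cases hu : u ∈ g.support
      swap
      · exact MvPolynomial.notMem_support_iff.mp hu
      have hnorm : IsNormal a v0 u := hg u hu
      have hsum : phi a a₀ hne c v0 g = ∑ u' ∈ g.support,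
          AddMonoidAlgebra.single ((latt a a₀).mkQ (natToZ u'))
            (coeff u' g * Lam a hne c v0 u') := by
        conv_lhs => rw [as_sum g]
        rw [map_sum]
        simp_rw [phi_monomial]
      have h0 : (∑ u' ∈ g.support, AddMonoidAlgebra.single ((latt a a₀).mkQ (natToZ u'))
          (coeff u' g * Lam a hne c v0 u')).coeff ((latt a a₀).mkQ (natToZ u)) = 0 := by
        rw [← hsum, hphig]
        rfl
      rw [AddMonoidAlgebra.coeff_sum, Finsupp.finset_sum_apply] at h0
      rw [Finset.sum_eq_single u] at h0
      · rw [AddMonoidAlgebra.coeff_single, Finsupp.single_eq_same] at h0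
        rcases mul_eq_zero.mp h0 with h' | h'
        · exact h'
        · exact absurd h' (Lam_ne_zero hne c v0 hc hnorm.1)
      · intro u' hu' hne'
        rw [AddMonoidAlgebra.coeff_single]
        apply Finsupp.single_eq_of_ne'
        intro heq
        exact hne' (normal_sep hdisj hdisj0 (hg u' hu') hnorm heq)
      · intro habs; exact absurd hu habs
    rw [hg0, zero_add]
    exact hh
  rw [hker]
  exact RingHom.ker_isPrime _

end PrimeSec

end Abstract

noncomputable section

/-- The monomial `T_i^{μ_i} = ∏_j T_{ij}^{μ_{ij}}` in the polynomial ring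
`k[T_{ij} : 1 ≤ i ≤ s, 1 ≤ j ≤ r_i]`. -/
def cayleyMonomial (k : Type*) [CommRing k] (s : ℕ) (r : Fin s → ℕ)
    (μ : (i : Fin s) → Fin (r i) → ℕ) (i : Fin s) :
    MvPolynomial (Σ i : Fin s, Fin (r i)) k :=
  ∏ j : Fin (r i), (X ⟨i, j⟩ : MvPolynomial (Σ i : Fin s, Fin (r i)) k) ^ μ i j

/-- The ideal generated by the `s - 2` trinomial relations
`T_i^{μ_i} + T_2^{μ_2} - z_i T_1^{μ_1}` for `3 ≤ i ≤ s` (here `0`-indexed: `2 ≤ i`). -/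
def AZIdeal (k : Type*) [CommRing k] (s : ℕ) (hs : 2 ≤ s) (r : Fin s → ℕ)
    (μ : (i : Fin s) → Fin (r i) → ℕ) (z : Fin s → k) :
    Ideal (MvPolynomial (Σ i : Fin s, Fin (r i)) k) :=
  Ideal.span {p | ∃ i : Fin s, 2 ≤ (i : ℕ) ∧
    p = cayleyMonomial k s r μ i + cayleyMonomial k s r μ ⟨1, by omega⟩
      - C (z i) * cayleyMonomial k s r μ ⟨0, by omega⟩}

/-- The ring `A[𝒵] = k[T_{ij}] / (T_i^{μ_i} + T_2^{μ_2} - z_i T_1^{μ_1} : 3 ≤ i ≤ s)`. -/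
def AZRing (k : Type*) [CommRing k] (s : ℕ) (hs : 2 ≤ s) (r : Fin s → ℕ)
    (μ : (i : Fin s) → Fin (r i) → ℕ) (z : Fin s → k) : Type _ :=
  MvPolynomial (Σ i : Fin s, Fin (r i)) k ⧸ AZIdeal k s hs r μ z

instance (k : Type*) [CommRing k] (s : ℕ) (hs : 2 ≤ s) (r : Fin s → ℕ)
    (μ : (i : Fin s) → Fin (r i) → ℕ) (z : Fin s → k) : CommRing (AZRing k s hs r μ z) :=
  inferInstanceAs (CommRing (MvPolynomial (Σ i : Fin s, Fin (r i)) k ⧸ AZIdeal k s hs r μ z))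

instance (k : Type*) [CommRing k] (s : ℕ) (hs : 2 ≤ s) (r : Fin s → ℕ)
    (μ : (i : Fin s) → Fin (r i) → ℕ) (z : Fin s → k) : Algebra k (AZRing k s hs r μ z) :=
  inferInstanceAs (Algebra k (MvPolynomial (Σ i : Fin s, Fin (r i)) k ⧸ AZIdeal k s hs r μ z))

/-- Admissibility of the data `𝒵`: all `r_i` and `μ_{ij}` are positive, the gcds
`gcd(μ_{i1}, …, μ_{i r_i})` are pairwise coprime, and the `z_i` (for `3 ≤ i ≤ s`,
`0`-indexed `2 ≤ i`) are nonzero and pairwise distinct. -/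
def AdmissibleData (k : Type*) [CommRing k] (s : ℕ) (r : Fin s → ℕ)
    (μ : (i : Fin s) → Fin (r i) → ℕ) (z : Fin s → k) : Prop :=
  (∀ i, 1 ≤ r i) ∧ (∀ (i : Fin s) (j : Fin (r i)), 1 ≤ μ i j) ∧
    (∀ i i' : Fin s, i ≠ i' →
      Nat.Coprime (Finset.univ.gcd (μ i)) (Finset.univ.gcd (μ i'))) ∧
    (∀ i : Fin s, 2 ≤ (i : ℕ) → z i ≠ 0) ∧
    (∀ i i' : Fin s, 2 ≤ (i : ℕ) → 2 ≤ (i' : ℕ) → z i = z i' → i = i')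

end

section App
variable {k : Type} [Field k] [IsAlgClosed k] [CharZero k]
variable {s : ℕ} (r : Fin s → ℕ) (μ : (i : Fin s) → Fin (r i) → ℕ)

/-- the exponent finsupp of the `i`-th block monomial -/
noncomputable def Aexp (i : Fin s) : (Σ i : Fin s, Fin (r i)) →₀ ℕ :=
  ∑ j : Fin (r i), Finsupp.single ⟨i, j⟩ (μ i j)

lemma Aexp_apply_same (i : Fin s) (j : Fin (r i)) : Aexp r μ i ⟨i, j⟩ = μ i j := by
  classical
  rw [Aexp, Finsupp.finset_sum_apply]
  rw [Finset.sum_eq_single j]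
  · rw [Finsupp.single_eq_same]
  · intro j' _ hj'
    apply Finsupp.single_eq_of_ne'
    simp [hj']
  · intro h; exact absurd (Finset.mem_univ j) h

lemma Aexp_apply_ne {i i' : Fin s} (h : i ≠ i') (j' : Fin (r i')) :
    Aexp r μ i ⟨i', j'⟩ = 0 := by
  classical
  rw [Aexp, Finsupp.finset_sum_apply]
  apply Finset.sum_eq_zero
  intro j _
  apply Finsupp.single_eq_of_ne'
  exact fun heq => h (congrArg Sigma.fst heq)

lemma Aexp_support (hμ : ∀ i j, 1 ≤ μ i j) (i : Fin s) :
    (Aexp r μ i).support = Finset.univ.image (fun j : Fin (r i) => (⟨i, j⟩ : Σ i, Fin (r i))) := by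
  classical
  ext v
  obtain ⟨i', j'⟩ := v
  rw [Finsupp.mem_support_iff, Finset.mem_image]
  constructor
  · intro h
    rcases eq_or_ne i i' with rfl | hne
    · exact ⟨j', Finset.mem_univ _, rfl⟩
    · exact absurd (Aexp_apply_ne r μ hne j') h
  · rintro ⟨j, _, heq⟩
    cases heq
    rw [Aexp_apply_same]
    exact Nat.one_le_iff_ne_zero.mp (hμ i j)

lemma Aexp_support_nonempty (hr : ∀ i, 1 ≤ r i) (hμ : ∀ i j, 1 ≤ μ i j) (i : Fin s) :
    (Aexp r μ i).support.Nonempty := by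
  rw [Aexp_support r μ hμ]
  exact ⟨⟨i, ⟨0, hr i⟩⟩, Finset.mem_image.mpr ⟨⟨0, hr i⟩, Finset.mem_univ _, rfl⟩⟩

lemma Aexp_support_disjoint (hμ : ∀ i j, 1 ≤ μ i j) {i i' : Fin s} (h : i ≠ i') :
    Disjoint (Aexp r μ i).support (Aexp r μ i').support := by
  rw [Finset.disjoint_left]
  intro v hv hv'
  obtain ⟨i'', j''⟩ := v
  rw [Finsupp.mem_support_iff] at hv hv'
  rcases eq_or_ne i i'' with rfl | hne
  · exact hv' (Aexp_apply_ne r μ (Ne.symm h) j'')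
  · exact hv (Aexp_apply_ne r μ hne j'')

lemma Aexp_not_mem (i : Fin s) {i' : Fin s} (j' : Fin (r i')) (h : i ≠ i') :
    (⟨i', j'⟩ : Σ i, Fin (r i)) ∉ (Aexp r μ i).support := by
  rw [Finsupp.mem_support_iff]
  intro hh
  exact hh (Aexp_apply_ne r μ h j')

lemma Aexp_gcd (hμ : ∀ i j, 1 ≤ μ i j) (i : Fin s) :
    dgcd (Aexp r μ i) = Finset.univ.gcd (μ i) := by
  classical
  rw [dgcd]
  apply Nat.dvd_antisymm
  · apply Finset.dvd_gcd
    intro j _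
    have hmem : (⟨i, j⟩ : Σ i, Fin (r i)) ∈ (Aexp r μ i).support := by
      rw [Finsupp.mem_support_iff, Aexp_apply_same]
      exact Nat.one_le_iff_ne_zero.mp (hμ i j)
    have := Finset.gcd_dvd (f := fun v => Aexp r μ i v) hmem
    rwa [Aexp_apply_same] at this
  · apply Finset.dvd_gcd
    intro v hv
    rw [Aexp_support r μ hμ, Finset.mem_image] at hv
    obtain ⟨j, _, rfl⟩ := hv
    rw [Aexp_apply_same]
    exact Finset.gcd_dvd (Finset.mem_univ j)

lemma monomial_finset_prod {τ : Type} (t : Finset τ) (d : τ → ((Σ i : Fin s, Fin (r i)) →₀ ℕ)) :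
    (∏ x ∈ t, (monomial (d x) (1:k) : MvPolynomial (Σ i : Fin s, Fin (r i)) k)) =
      monomial (∑ x ∈ t, d x) 1 := by
  classical
  induction t using Finset.induction with
  | empty => simp
  | insert _ _ h ih =>
      rw [Finset.prod_insert h, Finset.sum_insert h, ih, monomial_mul, one_mul]

lemma cayley_eq_monomial (i : Fin s) :
    cayleyMonomial k s r μ i = monomial (Aexp r μ i) 1 := by
  rw [cayleyMonomial, Aexp]
  rw [← monomial_finset_prod]
  apply Finset.prod_congr rfl
  intro j _
  rw [X_pow_eq_monomial]

lemma X_dvd_cayley (hμ : ∀ i j, 1 ≤ μ i j) (i : Fin s) (j : Fin (r i)) :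
    (X ⟨i, j⟩ : MvPolynomial (Σ i : Fin s, Fin (r i)) k) ∣ cayleyMonomial k s r μ i := by
  rw [cayleyMonomial]
  apply dvd_trans (dvd_pow_self (X (⟨i, j⟩ : Σ i, Fin (r i))) (Nat.one_le_iff_ne_zero.mp (hμ i j)))
  exact Finset.dvd_prod_of_mem _ (Finset.mem_univ j)

end App

section App2
variable {k : Type} [Field k] [IsAlgClosed k] [CharZero k]
variable {s : ℕ} {r : Fin s → ℕ} {μ : (i : Fin s) → Fin (r i) → ℕ}

lemma X_not_mem_AZIdeal (hs : 2 ≤ s) (z : Fin s → k) (hadm : AdmissibleData k s r μ z)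
    (i : Fin s) (j : Fin (r i)) : X ⟨i, j⟩ ∉ AZIdeal k s hs r μ z := by
  classical
  obtain ⟨hr, hμ, hgcd, hz0, hzinj⟩ := hadm
  obtain ⟨t, ht⟩ := Infinite.exists_notMem_finset (insert (0:k) (Finset.image z Finset.univ))
  have ht0 : t ≠ 0 := fun h => ht (by rw [h]; exact Finset.mem_insert_self 0 _)
  have htz : ∀ l, t ≠ z l := fun l h =>
    ht (Finset.mem_insert_of_mem (Finset.mem_image.mpr ⟨l, Finset.mem_univ l, h.symm⟩))
  set w : Fin s → k := fun l => if l.val = 0 then 1 else if l.val = 1 then t else z l - t with hw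
  have hwne : ∀ l, w l ≠ 0 := by
    intro l
    simp only [hw]
    split_ifs with h1 h2
    · exact one_ne_zero
    · exact ht0
    · exact sub_ne_zero.mpr fun h => htz l h.symm
  have hw0 : ∀ (h : (0:ℕ) < s), w ⟨0, h⟩ = 1 := fun h => by simp [hw]
  have hw1 : ∀ (h : (1:ℕ) < s), w ⟨1, h⟩ = t := fun h => by simp [hw]
  have hwl : ∀ l : Fin s, 2 ≤ l.val → w l = z l - t := by
    intro l hl
    simp only [hw]
    rw [if_neg (by omega), if_neg (by omega)]
  have hpos : ∀ l : Fin s, 0 < μ l ⟨0, hr l⟩ := fun l => hμ l _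
  choose rho hrho using fun l : Fin s => IsAlgClosed.exists_pow_nat_eq (w l) (hpos l)
  set x : (Σ i : Fin s, Fin (r i)) → k := fun v => if v.2 = ⟨0, hr v.1⟩ then rho v.1 else 1
    with hx
  have hxv : ∀ (l : Fin s) (jj : Fin (r l)), x ⟨l, jj⟩ = if jj = ⟨0, hr l⟩ then rho l else 1 :=
    fun l jj => rfl
  have heval : ∀ l, eval x (cayleyMonomial k s r μ l) = w l := by
    intro l
    rw [cayleyMonomial, map_prod]
    simp_rw [map_pow, eval_X]
    rw [Finset.prod_eq_single_of_mem (⟨0, hr l⟩ : Fin (r l)) (Finset.mem_univ _)]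
    · rw [hxv, if_pos rfl, hrho]
    · intro jj _ hjj
      rw [hxv, if_neg hjj, one_pow]
  intro hmem
  have hker : AZIdeal k s hs r μ z ≤ RingHom.ker (eval x : MvPolynomial _ k →+* k) := by
    rw [AZIdeal, Ideal.span_le]
    rintro p ⟨l, hl2, rfl⟩
    rw [SetLike.mem_coe, RingHom.mem_ker, map_sub, map_add, map_mul, eval_C,
      heval, heval, heval, hw0, hw1, hwl l hl2]
    ring
  have := hker hmem
  rw [RingHom.mem_ker, eval_X, hxv] at this
  rcases eq_or_ne j ⟨0, hr i⟩ with rfl | hj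
  · rw [if_pos rfl] at this
    apply hwne i
    rw [← hrho i, this, zero_pow]
    exact Nat.one_le_iff_ne_zero.mp (hpos i)
  · rw [if_neg hj] at this
    exact one_ne_zero this

lemma prime_mk_of_sup_prime {R : Type*} [CommRing R] {I : Ideal R} {x : R} (hx : x ∉ I)
    (hprime : (I ⊔ Ideal.span {x}).IsPrime) : Prime (Ideal.Quotient.mk I x) := by
  have hne : Ideal.Quotient.mk I x ≠ 0 := by
    rw [Ne, Ideal.Quotient.eq_zero_iff_mem]; exact hx
  rw [← Ideal.span_singleton_prime hne]
  have heq : Ideal.span {Ideal.Quotient.mk I x} =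
      Ideal.map (Ideal.Quotient.mk I) (I ⊔ Ideal.span {x}) := by
    rw [Ideal.map_sup, Ideal.map_quotient_self, bot_sup_eq, Ideal.map_span, Set.image_singleton]
  rw [heq]
  haveI := hprime
  exact Ideal.map_isPrime_of_surjective Ideal.Quotient.mk_surjective
    (by rw [Ideal.mk_ker]; exact le_sup_left)

end App2


section Final
variable {k : Type} [Field k] [IsAlgClosed k] [CharZero k]
variable {s : ℕ} {r : Fin s → ℕ} {μ : (i : Fin s) → Fin (r i) → ℕ}

-- Case 2 ≤ i.val
lemma caseA (hs : 2 ≤ s) (z : Fin s → k) (hadm : AdmissibleData k s r μ z)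
    (i : Fin s) (j : Fin (r i)) (hiv : 2 ≤ i.val) :
    (AZIdeal k s hs r μ z ⊔ Ideal.span {X ⟨i, j⟩}).IsPrime := by
  classical
  obtain ⟨hr, hμ, hgcd, hz0, hzinj⟩ := hadm
  have h0s : 0 < s := by omega
  have h1s : 1 < s := by omega
  have hprop1 : 1 ≤ (⟨1, h1s⟩ : Fin s).val ∧ (⟨1, h1s⟩ : Fin s) ≠ i := by
    refine ⟨le_refl 1, fun h => ?_⟩
    rw [← h] at hiv
    simp at hiv
  have heq : AZIdeal k s hs r μ z ⊔ Ideal.span {X ⟨i, j⟩} =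
      binIdeal (fun l : {l : Fin s // 1 ≤ l.val ∧ l ≠ i} => Aexp r μ l.1) (Aexp r μ ⟨0, h0s⟩)
        (fun l => if l.1.val = 1 then z i else z l.1 - z i) ⟨i, j⟩ := by
    rw [AZIdeal, ← Ideal.span_union, binIdeal]
    apply le_antisymm <;> rw [Ideal.span_le]
    · rintro p (⟨l, hl2, rfl⟩ | hp)
      · simp only [cayley_eq_monomial]
        have hmem1 : (monomial (Aexp r μ ⟨1, h1s⟩) (1:k) - C (z i) * monomial (Aexp r μ ⟨0, h0s⟩) 1)
            ∈ Ideal.span ({(X ⟨i, j⟩ : MvPolynomial (Σ i : Fin s, Fin (r i)) k)} ∪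
              Set.range (fun l : {l : Fin s // 1 ≤ l.val ∧ l ≠ i} =>
                (monomial (Aexp r μ l.1) (1:k)) -
                  C (if l.1.val = 1 then z i else z l.1 - z i) * monomial (Aexp r μ ⟨0, h0s⟩) 1)) := by
          apply Ideal.subset_span
          right
          exact ⟨⟨⟨1, h1s⟩, hprop1⟩, rfl⟩
        rcases eq_or_ne l i with rfl | hli
        · have hd : monomial (Aexp r μ l) (1:k) + monomial (Aexp r μ ⟨1, h1s⟩) 1
              - C (z l) * monomial (Aexp r μ ⟨0, h0s⟩) 1
              = monomial (Aexp r μ l) 1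
                + (monomial (Aexp r μ ⟨1, h1s⟩) 1 - C (z l) * monomial (Aexp r μ ⟨0, h0s⟩) 1) := by
            ring
          rw [hd]
          apply Ideal.add_mem
          · obtain ⟨q, hq⟩ : (X (⟨l, j⟩ : Σ i, Fin (r i)) : MvPolynomial _ k) ∣
                monomial (Aexp r μ l) 1 := by
              rw [← cayley_eq_monomial]; exact X_dvd_cayley r μ hμ l j
            rw [hq]
            exact Ideal.mul_mem_right _ _ (Ideal.subset_span (Or.inl rfl))
          · exact hmem1
        · have hlv1 : 1 ≤ l.val := by omega
          have hd : monomial (Aexp r μ l) (1:k) + monomial (Aexp r μ ⟨1, h1s⟩) 1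
              - C (z l) * monomial (Aexp r μ ⟨0, h0s⟩) 1
              = (monomial (Aexp r μ l) 1 - (C (z l) - C (z i)) * monomial (Aexp r μ ⟨0, h0s⟩) 1)
                + (monomial (Aexp r μ ⟨1, h1s⟩) 1 - C (z i) * monomial (Aexp r μ ⟨0, h0s⟩) 1) := by
            ring
          rw [hd]
          apply Ideal.add_mem _ _ hmem1
          apply Ideal.subset_span
          right
          refine ⟨⟨l, ⟨hlv1, hli⟩⟩, ?_⟩
          show (monomial (Aexp r μ l) (1:k)) - C (if l.val = 1 then z i else z l - z i) *
            monomial (Aexp r μ ⟨0, h0s⟩) 1 = _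
          rw [if_neg (show ¬ (l.val = 1) by omega), map_sub]
      · rw [Set.mem_singleton_iff] at hp
        subst hp
        exact Ideal.subset_span (Or.inl rfl)
    · have hgi : (cayleyMonomial k s r μ i + cayleyMonomial k s r μ ⟨1, h1s⟩
          - C (z i) * cayleyMonomial k s r μ ⟨0, h0s⟩ : MvPolynomial _ k) ∈
          Ideal.span ({p | ∃ i' : Fin s, 2 ≤ (i' : ℕ) ∧
            p = cayleyMonomial k s r μ i' + cayleyMonomial k s r μ ⟨1, by omega⟩
              - C (z i') * cayleyMonomial k s r μ ⟨0, by omega⟩} ∪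
              {(X ⟨i, j⟩ : MvPolynomial (Σ i : Fin s, Fin (r i)) k)}) :=
        Ideal.subset_span (Or.inl ⟨i, hiv, rfl⟩)
      have hMi : (cayleyMonomial k s r μ i : MvPolynomial _ k) ∈
          Ideal.span ({p | ∃ i' : Fin s, 2 ≤ (i' : ℕ) ∧
            p = cayleyMonomial k s r μ i' + cayleyMonomial k s r μ ⟨1, by omega⟩
              - C (z i') * cayleyMonomial k s r μ ⟨0, by omega⟩} ∪
              {(X ⟨i, j⟩ : MvPolynomial (Σ i : Fin s, Fin (r i)) k)}) := by
        obtain ⟨q, hq⟩ := X_dvd_cayley (k := k) r μ hμ i j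
        rw [hq]
        exact Ideal.mul_mem_right _ _ (Ideal.subset_span (Or.inr rfl))
      have h1mem : (cayleyMonomial k s r μ ⟨1, h1s⟩
          - C (z i) * cayleyMonomial k s r μ ⟨0, h0s⟩ : MvPolynomial _ k) ∈
          Ideal.span ({p | ∃ i' : Fin s, 2 ≤ (i' : ℕ) ∧
            p = cayleyMonomial k s r μ i' + cayleyMonomial k s r μ ⟨1, by omega⟩
              - C (z i') * cayleyMonomial k s r μ ⟨0, by omega⟩} ∪
              {(X ⟨i, j⟩ : MvPolynomial (Σ i : Fin s, Fin (r i)) k)}) := by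
        have hd : (cayleyMonomial k s r μ ⟨1, h1s⟩
            - C (z i) * cayleyMonomial k s r μ ⟨0, h0s⟩ : MvPolynomial _ k)
            = (cayleyMonomial k s r μ i + cayleyMonomial k s r μ ⟨1, h1s⟩
              - C (z i) * cayleyMonomial k s r μ ⟨0, h0s⟩) - cayleyMonomial k s r μ i := by
          ring
        rw [hd]
        exact Ideal.sub_mem _ hgi hMi
      rintro p (hp | ⟨l, rfl⟩)
      · rw [Set.mem_singleton_iff] at hp
        subst hp
        exact Ideal.subset_span (Or.inr rfl)
      · simp only
        rcases eq_or_ne l.1.val 1 with hl1 | hl1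
        · have hl1' : l.1 = ⟨1, h1s⟩ := Fin.ext hl1
          rw [hl1', if_pos rfl, ← cayley_eq_monomial, ← cayley_eq_monomial]
          exact h1mem
        · have hlv : 2 ≤ l.1.val := by have := l.2.1; omega
          have hglmem := Ideal.subset_span
            (s := {p | ∃ i' : Fin s, 2 ≤ (i' : ℕ) ∧
              p = cayleyMonomial k s r μ i' + cayleyMonomial k s r μ ⟨1, by omega⟩
                - C (z i') * cayleyMonomial k s r μ ⟨0, by omega⟩} ∪
                {(X ⟨i, j⟩ : MvPolynomial (Σ i : Fin s, Fin (r i)) k)})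
            (Or.inl ⟨l.1, hlv, rfl⟩)
          have hd : (monomial (Aexp r μ l.1) (1:k))
              - C (if l.1.val = 1 then z i else z l.1 - z i) * monomial (Aexp r μ ⟨0, h0s⟩) 1
              = (cayleyMonomial k s r μ l.1 + cayleyMonomial k s r μ ⟨1, h1s⟩
                - C (z l.1) * cayleyMonomial k s r μ ⟨0, h0s⟩)
                - (cayleyMonomial k s r μ ⟨1, h1s⟩ - C (z i) * cayleyMonomial k s r μ ⟨0, h0s⟩) := by
            rw [if_neg hl1, map_sub]
            simp only [cayley_eq_monomial]
            ring
          rw [hd]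
          exact Ideal.sub_mem _ hglmem h1mem
  rw [heq]
  apply binIdeal_isPrime
  · intro l l' hne
    exact Aexp_support_disjoint r μ hμ (fun h => hne (Subtype.ext h))
  · intro l
    apply Aexp_support_disjoint r μ hμ
    intro h
    have h1 := l.2.1
    rw [h] at h1
    simp at h1
  · intro l; exact Aexp_support_nonempty r μ hr hμ _
  · intro l
    exact Aexp_not_mem r μ l.1 j l.2.2
  · apply Aexp_not_mem r μ _ j
    intro h
    rw [← h] at hiv
    simp at hiv
  · intro l
    split_ifs with h1
    · exact hz0 i hiv
    · have hlv : 2 ≤ l.1.val := by have := l.2.1; omega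
      exact sub_ne_zero.mpr (fun h => l.2.2 (hzinj l.1 i hlv hiv h))
  · intro l l' hne
    rw [Aexp_gcd r μ hμ, Aexp_gcd r μ hμ]
    exact hgcd l.1 l'.1 (fun h => hne (Subtype.ext h))
  · intro l
    rw [Aexp_gcd r μ hμ, Aexp_gcd r μ hμ]
    apply hgcd l.1 _
    intro h
    have h1 := l.2.1
    rw [h] at h1
    simp at h1

end Final

section Final2
variable {k : Type} [Field k] [IsAlgClosed k] [CharZero k]
variable {s : ℕ} {r : Fin s → ℕ} {μ : (i : Fin s) → Fin (r i) → ℕ}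

-- Case i.val = 0
lemma caseB (hs : 2 ≤ s) (z : Fin s → k) (hadm : AdmissibleData k s r μ z)
    (i : Fin s) (j : Fin (r i)) (hiv : i.val = 0) :
    (AZIdeal k s hs r μ z ⊔ Ideal.span {X ⟨i, j⟩}).IsPrime := by
  classical
  obtain ⟨hr, hμ, hgcd, hz0, hzinj⟩ := hadm
  have h0s : 0 < s := by omega
  have h1s : 1 < s := by omega
  have hieq : i = ⟨0, h0s⟩ := Fin.ext hiv
  have hCneg : (C (-1 : k) : MvPolynomial (Σ i : Fin s, Fin (r i)) k) = -1 := by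
    rw [map_neg, map_one]
  have hdvd0 : (X (⟨i, j⟩ : Σ i : Fin s, Fin (r i)) : MvPolynomial _ k) ∣
      monomial (Aexp r μ ⟨0, h0s⟩) 1 := by
    rw [← cayley_eq_monomial, ← hieq]
    exact X_dvd_cayley r μ hμ i j
  have heq : AZIdeal k s hs r μ z ⊔ Ideal.span {X ⟨i, j⟩} =
      binIdeal (fun l : {l : Fin s // 2 ≤ l.val} => Aexp r μ l.1) (Aexp r μ ⟨1, h1s⟩)
        (fun _ => (-1 : k)) ⟨i, j⟩ := by
    rw [AZIdeal, ← Ideal.span_union, binIdeal]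
    apply le_antisymm <;> rw [Ideal.span_le]
    · rintro p (⟨l, hl2, rfl⟩ | hp)
      · simp only [cayley_eq_monomial]
        have hd : monomial (Aexp r μ l) (1:k) + monomial (Aexp r μ ⟨1, h1s⟩) 1
            - C (z l) * monomial (Aexp r μ ⟨0, h0s⟩) 1
            = (monomial (Aexp r μ l) 1 - C (-1 : k) * monomial (Aexp r μ ⟨1, h1s⟩) 1)
              - C (z l) * monomial (Aexp r μ ⟨0, h0s⟩) 1 := by
          rw [hCneg]; ring
        rw [hd]
        apply Ideal.sub_mem
        · exact Ideal.subset_span (Or.inr ⟨⟨l, hl2⟩, rfl⟩)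
        · apply Ideal.mul_mem_left
          obtain ⟨q, hq⟩ := hdvd0
          rw [hq]
          exact Ideal.mul_mem_right _ _ (Ideal.subset_span (Or.inl rfl))
      · rw [Set.mem_singleton_iff] at hp
        subst hp
        exact Ideal.subset_span (Or.inl rfl)
    · rintro p (hp | ⟨l, rfl⟩)
      · rw [Set.mem_singleton_iff] at hp
        subst hp
        exact Ideal.subset_span (Or.inr rfl)
      · show (monomial (Aexp r μ l.1) (1:k)) - C (-1 : k) * monomial (Aexp r μ ⟨1, h1s⟩) 1 ∈ _
        have hd : (monomial (Aexp r μ l.1) (1:k)) - C (-1 : k) * monomial (Aexp r μ ⟨1, h1s⟩) 1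
            = (cayleyMonomial k s r μ l.1 + cayleyMonomial k s r μ ⟨1, h1s⟩
              - C (z l.1) * cayleyMonomial k s r μ ⟨0, h0s⟩)
              + C (z l.1) * cayleyMonomial k s r μ ⟨0, h0s⟩ := by
          rw [hCneg]
          simp only [cayley_eq_monomial]
          ring
        rw [hd]
        apply Ideal.add_mem
        · exact Ideal.subset_span (Or.inl ⟨l.1, l.2, rfl⟩)
        · apply Ideal.mul_mem_left
          rw [cayley_eq_monomial r μ (⟨0, h0s⟩ : Fin s)]
          obtain ⟨q, hq⟩ := hdvd0
          rw [hq]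
          exact Ideal.mul_mem_right _ _ (Ideal.subset_span (Or.inr rfl))
  rw [heq]
  have hne01 : ∀ l : {l : Fin s // 2 ≤ l.val}, l.1 ≠ ⟨1, h1s⟩ := by
    intro l h
    have := l.2
    rw [h] at this
    simp at this
  have hnei : ∀ l : {l : Fin s // 2 ≤ l.val}, l.1 ≠ i := by
    intro l h
    have := l.2
    rw [h] at this
    omega
  apply binIdeal_isPrime
  · intro l l' hne
    exact Aexp_support_disjoint r μ hμ (fun h => hne (Subtype.ext h))
  · intro l
    exact Aexp_support_disjoint r μ hμ (hne01 l)
  · intro l; exact Aexp_support_nonempty r μ hr hμ _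
  · intro l
    exact Aexp_not_mem r μ l.1 j (hnei l)
  · apply Aexp_not_mem r μ _ j
    intro h
    rw [hieq] at h
    exact absurd (congrArg Fin.val h) (by simp)
  · intro l
    exact neg_ne_zero.mpr one_ne_zero
  · intro l l' hne
    rw [Aexp_gcd r μ hμ, Aexp_gcd r μ hμ]
    exact hgcd l.1 l'.1 (fun h => hne (Subtype.ext h))
  · intro l
    rw [Aexp_gcd r μ hμ, Aexp_gcd r μ hμ]
    exact hgcd l.1 _ (hne01 l)

-- Case i.val = 1
lemma caseC (hs : 2 ≤ s) (z : Fin s → k) (hadm : AdmissibleData k s r μ z)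
    (i : Fin s) (j : Fin (r i)) (hiv : i.val = 1) :
    (AZIdeal k s hs r μ z ⊔ Ideal.span {X ⟨i, j⟩}).IsPrime := by
  classical
  obtain ⟨hr, hμ, hgcd, hz0, hzinj⟩ := hadm
  have h0s : 0 < s := by omega
  have h1s : 1 < s := by omega
  have hieq : i = ⟨1, h1s⟩ := Fin.ext hiv
  have hdvd1 : (X (⟨i, j⟩ : Σ i : Fin s, Fin (r i)) : MvPolynomial _ k) ∣
      monomial (Aexp r μ ⟨1, h1s⟩) 1 := by
    rw [← cayley_eq_monomial, ← hieq]
    exact X_dvd_cayley r μ hμ i j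
  have heq : AZIdeal k s hs r μ z ⊔ Ideal.span {X ⟨i, j⟩} =
      binIdeal (fun l : {l : Fin s // 2 ≤ l.val} => Aexp r μ l.1) (Aexp r μ ⟨0, h0s⟩)
        (fun l => z l.1) ⟨i, j⟩ := by
    rw [AZIdeal, ← Ideal.span_union, binIdeal]
    apply le_antisymm <;> rw [Ideal.span_le]
    · rintro p (⟨l, hl2, rfl⟩ | hp)
      · simp only [cayley_eq_monomial]
        have hd : monomial (Aexp r μ l) (1:k) + monomial (Aexp r μ ⟨1, h1s⟩) 1
            - C (z l) * monomial (Aexp r μ ⟨0, h0s⟩) 1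
            = (monomial (Aexp r μ l) 1 - C (z l) * monomial (Aexp r μ ⟨0, h0s⟩) 1)
              + monomial (Aexp r μ ⟨1, h1s⟩) 1 := by
          ring
        rw [hd]
        apply Ideal.add_mem
        · exact Ideal.subset_span (Or.inr ⟨⟨l, hl2⟩, rfl⟩)
        · obtain ⟨q, hq⟩ := hdvd1
          rw [hq]
          exact Ideal.mul_mem_right _ _ (Ideal.subset_span (Or.inl rfl))
      · rw [Set.mem_singleton_iff] at hp
        subst hp
        exact Ideal.subset_span (Or.inl rfl)
    · rintro p (hp | ⟨l, rfl⟩)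
      · rw [Set.mem_singleton_iff] at hp
        subst hp
        exact Ideal.subset_span (Or.inr rfl)
      · show (monomial (Aexp r μ l.1) (1:k)) - C (z l.1) * monomial (Aexp r μ ⟨0, h0s⟩) 1 ∈ _
        have hd : (monomial (Aexp r μ l.1) (1:k)) - C (z l.1) * monomial (Aexp r μ ⟨0, h0s⟩) 1
            = (cayleyMonomial k s r μ l.1 + cayleyMonomial k s r μ ⟨1, h1s⟩
              - C (z l.1) * cayleyMonomial k s r μ ⟨0, h0s⟩)
              - cayleyMonomial k s r μ ⟨1, h1s⟩ := by
          simp only [cayley_eq_monomial]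
          ring
        rw [hd]
        apply Ideal.sub_mem
        · exact Ideal.subset_span (Or.inl ⟨l.1, l.2, rfl⟩)
        · rw [cayley_eq_monomial r μ (⟨1, h1s⟩ : Fin s)]
          obtain ⟨q, hq⟩ := hdvd1
          rw [hq]
          exact Ideal.mul_mem_right _ _ (Ideal.subset_span (Or.inr rfl))
  rw [heq]
  have hne00 : ∀ l : {l : Fin s // 2 ≤ l.val}, l.1 ≠ ⟨0, h0s⟩ := by
    intro l h
    have := l.2
    rw [h] at this
    simp at this
  have hnei : ∀ l : {l : Fin s // 2 ≤ l.val}, l.1 ≠ i := by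
    intro l h
    have := l.2
    rw [h] at this
    omega
  apply binIdeal_isPrime
  · intro l l' hne
    exact Aexp_support_disjoint r μ hμ (fun h => hne (Subtype.ext h))
  · intro l
    exact Aexp_support_disjoint r μ hμ (hne00 l)
  · intro l; exact Aexp_support_nonempty r μ hr hμ _
  · intro l
    exact Aexp_not_mem r μ l.1 j (hnei l)
  · apply Aexp_not_mem r μ _ j
    intro h
    rw [hieq] at h
    exact absurd (congrArg Fin.val h) (by simp)
  · intro l
    exact hz0 l.1 l.2
  · intro l l' hne
    rw [Aexp_gcd r μ hμ, Aexp_gcd r μ hμ]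
    exact hgcd l.1 l'.1 (fun h => hne (Subtype.ext h))
  · intro l
    rw [Aexp_gcd r μ hμ, Aexp_gcd r μ hμ]
    exact hgcd l.1 _ (hne00 l)

end Final2

theorem AZRing_variable_prime (k : Type) [Field k] [IsAlgClosed k] [CharZero k]
    (s : ℕ) (hs : 2 ≤ s) (r : Fin s → ℕ) (μ : (i : Fin s) → Fin (r i) → ℕ) (z : Fin s → k)
    (hadm : AdmissibleData k s r μ z) (i : Fin s) (j : Fin (r i)) :
    Prime (Ideal.Quotient.mk (AZIdeal k s hs r μ z)
      (X ⟨i, j⟩ : MvPolynomial (Σ i : Fin s, Fin (r i)) k)) := by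
  apply prime_mk_of_sup_prime (X_not_mem_AZIdeal hs z hadm i j)
  rcases Nat.lt_or_ge i.val 2 with hiv | hiv
  · interval_cases h : i.val
    · exact caseB hs z hadm i j h
    · exact caseC hs z hadm i j h
  · exact caseA hs z hadm i j hiv
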